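/- There exists an absolute constant C > 0 such that for every alphabet Σ and every string S over Σ of length n ≥ 2, the number of pairs (i, j) that are a consecutive occurrence of at least one nonempty pattern in S is at most C · n · log n; that is, card{(i, j) : ∃ nonempty pattern P, (i, j) ∈ D_S(P)} ≤ C · n · log n. -/

import Mathlib

variable {α : Type*}

/-- `i` is an occurrence of pattern `P` in string `S`. -/
def IsOcc (S P : List α) (i : ℕ) : Prop :=
  i + P.length ≤ S.length ∧ ∀ t < P.length, S[i + t]? = P[t]?

/-- The set of occurrences of `P` in `S`. -/
def OccSet (S P : List α) : Set ℕ := {i | IsOcc S P i}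

/-- `(i, j)` is a consecutive occurrence of `P` in `S`. -/
def IsConsec (S P : List α) (i j : ℕ) : Prop :=
  i < j ∧ IsOcc S P i ∧ IsOcc S P j ∧ ∀ k, i < k → k < j → ¬ IsOcc S P k

/-- The set of consecutive occurrences of `P` in `S`. -/
def DSet (S P : List α) : Set (ℕ × ℕ) := {p | IsConsec S P p.1 p.2}

namespace CCount

variable {σ : Type*} [DecidableEq σ] (S : List σ)

def sub (i ℓ : ℕ) : List σ := (S.drop i).take ℓ

lemma sub_length {i ℓ : ℕ} (h : i + ℓ ≤ S.length) : (sub S i ℓ).length = ℓ := by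
  simp [sub]; omega

lemma sub_take (i ℓ : ℕ) : sub S i ℓ = (sub S i (ℓ+1)).take ℓ := by
  simp [sub, List.take_take]

lemma sub_eq_of_succ {x y ℓ : ℕ} (h : sub S x (ℓ+1) = sub S y (ℓ+1)) :
    sub S x ℓ = sub S y ℓ := by
  rw [sub_take S x ℓ, sub_take S y ℓ, h]

lemma isOcc_iff (P : List σ) (i : ℕ) :
    IsOcc S P i ↔ i + P.length ≤ S.length ∧ sub S i P.length = P := by
  constructor
  · rintro ⟨h1, h2⟩
    refine ⟨h1, ?_⟩
    apply List.ext_getElem?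
    intro t
    by_cases ht : t < P.length
    · rw [sub]
      rw [List.getElem?_take, if_pos ht, List.getElem?_drop]
      exact h2 t ht
    · rw [List.getElem?_eq_none (by simp [sub]; omega),
        List.getElem?_eq_none (by omega)]
  · rintro ⟨h1, h2⟩
    refine ⟨h1, fun t ht => ?_⟩
    conv_rhs => rw [← h2]
    rw [sub, List.getElem?_take, if_pos ht, List.getElem?_drop]

/-- Ground set at level `ℓ` : positions `i` with `i + ℓ ≤ |S|`. -/
def G (ℓ : ℕ) : Finset ℕ := Finset.range (S.length + 1 - ℓ)

lemma mem_G {ℓ i : ℕ} : i ∈ G S ℓ ↔ i + ℓ ≤ S.length := by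
  simp [G, Finset.mem_range]; omega

lemma G_succ_subset (ℓ : ℕ) : G S (ℓ+1) ⊆ G S ℓ := by
  intro x hx; rw [mem_G] at *; omega

/-- Equivalence class of `i` at level `ℓ`. -/
def cls (ℓ i : ℕ) : Finset ℕ := (G S ℓ).filter (fun x => sub S x ℓ = sub S i ℓ)

lemma mem_cls {ℓ i x : ℕ} : x ∈ cls S ℓ i ↔ x + ℓ ≤ S.length ∧ sub S x ℓ = sub S i ℓ := by
  simp [cls, mem_G]

lemma self_mem_cls {ℓ i : ℕ} (h : i + ℓ ≤ S.length) : i ∈ cls S ℓ i := by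
  rw [mem_cls]; exact ⟨h, rfl⟩

lemma cls_congr {ℓ i j : ℕ} (h : sub S i ℓ = sub S j ℓ) : cls S ℓ i = cls S ℓ j := by
  unfold cls; apply Finset.filter_congr; intro x _; rw [h]

lemma cls_succ_subset {ℓ i : ℕ} : cls S (ℓ+1) i ⊆ cls S ℓ i := by
  intro x hx; rw [mem_cls] at *
  exact ⟨by omega, sub_eq_of_succ S hx.2⟩

/-- `(x, y)` are adjacent members of a class at level `ℓ`. -/
def adjP (ℓ : ℕ) (p : ℕ × ℕ) : Prop :=
  p.1 < p.2 ∧ p.2 + ℓ ≤ S.length ∧ sub S p.1 ℓ = sub S p.2 ℓ ∧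
    ∀ z ∈ Finset.Ioo p.1 p.2, sub S z ℓ ≠ sub S p.1 ℓ

instance (ℓ : ℕ) : DecidablePred (adjP S ℓ) := fun p => by
  unfold adjP; infer_instance

/-- Level-`ℓ` adjacent pairs, as a finset. -/
def A (ℓ : ℕ) : Finset (ℕ × ℕ) := ((G S ℓ) ×ˢ (G S ℓ)).filter (adjP S ℓ)

lemma mem_A {ℓ : ℕ} (hℓ : 1 ≤ ℓ) {p : ℕ × ℕ} : p ∈ A S ℓ ↔ adjP S ℓ p := by
  simp only [A, Finset.mem_filter, Finset.mem_product, and_iff_right_iff_imp]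
  rintro ⟨h1, h2, -⟩
  rw [mem_G, mem_G]
  omega

/-- Pairs born at level `ℓ` (adjacent at `ℓ` but not at `ℓ - 1`). -/
def B (ℓ : ℕ) : Finset (ℕ × ℕ) := (A S ℓ).filter (fun p => ¬ adjP S (ℓ-1) p)

/-- Successor uniqueness. -/
lemma adjP_right_unique {ℓ : ℕ} {x y y' : ℕ} (h : adjP S ℓ (x, y)) (h' : adjP S ℓ (x, y')) :
    y = y' := by
  by_contra hne
  rcases lt_or_gt_of_ne hne with hlt | hlt
  · exact h'.2.2.2 y (by simp; exact ⟨h.1, hlt⟩) h.2.2.1.symm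
  · exact h.2.2.2 y' (by simp; exact ⟨h'.1, hlt⟩) h'.2.2.1.symm

/-- Membership of endpoints in the ground set. -/
lemma adjP_mem_G {ℓ : ℕ} {p : ℕ × ℕ} (h : adjP S ℓ p) : p.1 ∈ G S ℓ ∧ p.2 ∈ G S ℓ := by
  rw [mem_G, mem_G]
  have := h.1; have := h.2.1
  omega

end CCount

namespace CCount

set_option linter.unusedSectionVars false

variable {σ : Type*} [DecidableEq σ] (S : List σ)

lemma exists_adjP_iff (p : ℕ × ℕ) :
    (∃ P : List σ, P ≠ [] ∧ IsConsec S P p.1 p.2) ↔ ∃ ℓ, 1 ≤ ℓ ∧ adjP S ℓ p := by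
  constructor
  · rintro ⟨P, hP, hij, hoi, hoj, hbet⟩
    refine ⟨P.length, by cases P <;> simp_all, hij, ?_, ?_, ?_⟩
    · exact (isOcc_iff S P p.2).1 hoj |>.1
    · rw [((isOcc_iff S P p.1).1 hoi).2, ((isOcc_iff S P p.2).1 hoj).2]
    · intro z hz hzsub
      rw [Finset.mem_Ioo] at hz
      refine hbet z hz.1 hz.2 ?_
      rw [isOcc_iff]
      have := (isOcc_iff S P p.2).1 hoj |>.1
      constructor
      · omega
      · rw [hzsub, ((isOcc_iff S P p.1).1 hoi).2]
  · rintro ⟨ℓ, hℓ, hij, hjn, hsub, hbet⟩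
    have hin : p.1 + ℓ ≤ S.length := by omega
    refine ⟨sub S p.1 ℓ, ?_, hij, ?_, ?_, ?_⟩
    · have := sub_length S hin
      intro he; rw [he] at this; simp at this; omega
    · rw [isOcc_iff, sub_length S hin]; exact ⟨hin, rfl⟩
    · rw [isOcc_iff, sub_length S hin, hsub]
      exact ⟨hjn, rfl⟩
    · intro k hk1 hk2 hocc
      rw [isOcc_iff, sub_length S hin] at hocc
      exact hbet k (by simp [Finset.mem_Ioo]; omega) hocc.2

/-- Every pair in the union is in `A 1` or born at some level `2 ≤ ℓ ≤ n - 1`. -/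
lemma cover (p : ℕ × ℕ) (hp : ∃ P : List σ, P ≠ [] ∧ IsConsec S P p.1 p.2) :
    p ∈ A S 1 ∪ (Finset.Icc 2 (S.length - 1)).biUnion (B S) := by
  rw [exists_adjP_iff] at hp
  classical
  have hex : ∃ ℓ, 1 ≤ ℓ ∧ adjP S ℓ p := hp
  let ℓ₀ := Nat.find hex
  obtain ⟨h1, h2⟩ : 1 ≤ ℓ₀ ∧ adjP S ℓ₀ p := Nat.find_spec hex
  have hub : ℓ₀ ≤ S.length - 1 := by
    have := h2.1; have := h2.2.1; omega
  rcases eq_or_lt_of_le h1 with heq | hlt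
  · rw [Finset.mem_union]
    left
    rw [mem_A S le_rfl]
    rw [← heq] at h2
    exact h2
  · rw [Finset.mem_union]
    right
    rw [Finset.mem_biUnion]
    refine ⟨ℓ₀, by rw [Finset.mem_Icc]; omega, ?_⟩
    rw [B, Finset.mem_filter, mem_A S (by omega)]
    refine ⟨h2, ?_⟩
    have := Nat.find_min hex (m := ℓ₀ - 1) (by omega)
    intro hadj
    exact this ⟨by omega, hadj⟩

end CCount

namespace CCount

set_option linter.unusedSectionVars false

variable {σ : Type*} [DecidableEq σ] (S : List σ)

lemma cls_eq_of_mem {ℓ i x : ℕ} (h : x ∈ cls S ℓ i) : cls S ℓ x = cls S ℓ i :=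
  cls_congr S ((mem_cls S).1 h).2

/-- Representatives (minima) of the classes at level `ℓ`. -/
def R (ℓ : ℕ) : Finset ℕ := (G S ℓ).filter (fun r => ∀ x ∈ cls S ℓ r, r ≤ x)

lemma exists_rep {ℓ x : ℕ} (hx : x ∈ G S ℓ) : ∃ r ∈ R S ℓ, x ∈ cls S ℓ r := by
  have hne : (cls S ℓ x).Nonempty := ⟨x, self_mem_cls S ((mem_G S).1 hx)⟩
  set r := (cls S ℓ x).min' hne with hr
  have hrmem : r ∈ cls S ℓ x := Finset.min'_mem _ hne
  have hcls : cls S ℓ r = cls S ℓ x := cls_eq_of_mem S hrmem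
  refine ⟨r, ?_, by rw [hcls]; exact self_mem_cls S ((mem_G S).1 hx)⟩
  rw [R, Finset.mem_filter]
  refine ⟨(mem_cls S).1 hrmem |>.1 |> (mem_G S).2, ?_⟩
  intro y hy
  rw [hcls] at hy
  exact Finset.min'_le _ y hy

lemma rep_disjoint {ℓ : ℕ} {r r' : ℕ} (hr : r ∈ R S ℓ) (hr' : r' ∈ R S ℓ)
    (hne : r ≠ r') : Disjoint (cls S ℓ r) (cls S ℓ r') := by
  rw [Finset.disjoint_left]
  intro x hx hx'
  have h1 : cls S ℓ r = cls S ℓ r' := by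
    rw [← cls_eq_of_mem S hx, cls_eq_of_mem S hx']
  rw [R, Finset.mem_filter] at hr hr'
  have hrr : r ∈ cls S ℓ r := self_mem_cls S ((mem_G S).1 hr.1)
  have hrr' : r' ∈ cls S ℓ r' := self_mem_cls S ((mem_G S).1 hr'.1)
  have := hr.2 r' (by rw [h1]; exact hrr')
  have := hr'.2 r (by rw [← h1]; exact hrr)
  omega

lemma G_eq_biUnion (ℓ : ℕ) : G S ℓ = (R S ℓ).biUnion (cls S ℓ) := by
  apply Finset.Subset.antisymm
  · intro x hx
    rw [Finset.mem_biUnion]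
    exact exists_rep S hx
  · intro x hx
    rw [Finset.mem_biUnion] at hx
    obtain ⟨r, -, hx⟩ := hx
    exact (mem_G S).2 ((mem_cls S).1 hx).1

lemma mem_B_succ {ℓ : ℕ} {p : ℕ × ℕ} :
    p ∈ B S (ℓ+1) ↔ adjP S (ℓ+1) p ∧ ¬ adjP S ℓ p := by
  rw [B, Finset.mem_filter, mem_A S (by omega)]
  simp

/-- A pair born at level `ℓ+1 ≥ 2` has a witness at level `ℓ`. -/
lemma birth_witness {ℓ : ℕ} {p : ℕ × ℕ} (hp : p ∈ B S (ℓ+1)) :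
    ∃ z ∈ Finset.Ioo p.1 p.2, sub S z ℓ = sub S p.1 ℓ := by
  rw [mem_B_succ] at hp
  obtain ⟨h1, h2⟩ := hp
  by_contra hno
  push_neg at hno
  exact h2 ⟨h1.1, by have := h1.2.1; omega, sub_eq_of_succ S h1.2.2.1, hno⟩

end CCount

namespace CCount

/-- The key numeric fact: `min (c-d) (d-1) ≤ 2 d log₂(c/d)`. -/
lemma numeric {c d m : ℕ} (h1 : 1 ≤ d) (h2 : d ≤ c) (hm1 : m ≤ c - d) (hm2 : m ≤ d - 1) :
    (m : ℝ) ≤ 2 * d * (Real.logb 2 c - Real.logb 2 d) := by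
  have hL0 : (0:ℝ) < Real.log 2 := Real.log_pos (by norm_num)
  have hL1 : Real.log 2 ≤ 1 := by
    have := Real.log_le_sub_one_of_pos (x := 2) (by norm_num)
    linarith
  have hdpos : (0:ℝ) < d := by exact_mod_cast h1
  have hcpos : (0:ℝ) < c := by have : (1:ℕ) ≤ c := le_trans h1 h2; exact_mod_cast this
  set X : ℝ := Real.log c - Real.log d with hX
  have hXnn : 0 ≤ X := by
    have := Real.log_le_log (by positivity) (show (d:ℝ) ≤ c by exact_mod_cast h2)
    linarith
  have hrw : Real.logb 2 c - Real.logb 2 d = X / Real.log 2 := by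
    rw [Real.logb, Real.logb, div_sub_div_same]
  rw [hrw, ← mul_div_assoc, le_div_iff₀ hL0]
  -- suffices: m * log 2 ≤ 2 * d * X
  rcases le_or_gt (2 * d) c with hc | hc
  · -- big jump: X ≥ log 2
    have hXL : Real.log 2 ≤ X := by
      have h2d : (2:ℝ) * d ≤ c := by exact_mod_cast hc
      have : Real.log (2 * d) ≤ Real.log c := Real.log_le_log (by positivity) h2d
      rw [Real.log_mul (by norm_num) (ne_of_gt hdpos)] at this
      linarith
    have hmd : (m:ℝ) ≤ d := by
      have : m ≤ d := by omega
      exact_mod_cast this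
    nlinarith
  · -- small jump: use log(d/c) ≤ d/c - 1
    have hkey : (c:ℝ) - d ≤ (c:ℝ) * X := by
      have := Real.log_le_sub_one_of_pos (x := (d:ℝ)/c) (by positivity)
      rw [Real.log_div (ne_of_gt hdpos) (ne_of_gt hcpos)] at this
      have h3 : Real.log d - Real.log c ≤ (d:ℝ)/c - 1 := this
      have h4 : 1 - (d:ℝ)/c ≤ X := by linarith
      have h5 : (c:ℝ) * (1 - (d:ℝ)/c) = c - d := by field_simp
      nlinarith
    have hmcd : (m:ℝ) ≤ (c:ℝ) - d := by
      have : (m:ℝ) ≤ ((c - d : ℕ) : ℝ) := by exact_mod_cast hm1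
      have hcd : ((c - d : ℕ) : ℝ) = (c:ℝ) - d := by
        have : d ≤ c := h2
        push_cast [Nat.cast_sub this]
        ring
      linarith [hcd ▸ this]
    have hcd2 : (c:ℝ) ≤ 2 * d := by exact_mod_cast hc.le
    nlinarith

end CCount

namespace CCount

set_option linter.unusedSectionVars false

variable {σ : Type*} [DecidableEq σ] (S : List σ)

lemma fst_mem_cls {ℓ r : ℕ} {p : ℕ × ℕ} (hp : adjP S (ℓ+1) p)
    (h1 : p.1 ∈ cls S (ℓ+1) r) : p.2 ∈ cls S (ℓ+1) r := by
  rw [mem_cls] at h1 ⊢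
  exact ⟨hp.2.1, hp.2.2.1.symm.trans h1.2⟩

/-- Births within the class of `r` are at most `|cls_{ℓ+1}(r)| - 1`. -/
lemma card_Br_le_done {ℓ r : ℕ} (hr : r ∈ G S (ℓ+1)) :
    ((B S (ℓ+1)).filter (fun p => p.1 ∈ cls S (ℓ+1) r)).card
      ≤ (cls S (ℓ+1) r).card - 1 := by
  have hne : (cls S (ℓ+1) r).Nonempty := ⟨r, self_mem_cls S ((mem_G S).1 hr)⟩
  set M := (cls S (ℓ+1) r).max' hne with hM
  have h1 : ((cls S (ℓ+1) r).erase M).card = (cls S (ℓ+1) r).card - 1 :=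
    Finset.card_erase_of_mem (Finset.max'_mem _ hne)
  rw [← h1]
  apply Finset.card_le_card_of_injOn Prod.fst
  · intro p hp
    rw [Finset.mem_coe, Finset.mem_filter, mem_B_succ] at hp
    obtain ⟨⟨hadj, -⟩, hmem⟩ := hp
    rw [Finset.mem_coe, Finset.mem_erase]
    refine ⟨?_, hmem⟩
    have h2 : p.2 ∈ cls S (ℓ+1) r := fst_mem_cls S hadj hmem
    have := Finset.le_max' _ p.2 h2
    have := hadj.1
    omega
  · intro p hp q hq hpq
    simp only [Finset.coe_filter, Set.mem_setOf_eq, mem_B_succ] at hp hq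
    have := adjP_right_unique S (x := p.1) (y := p.2) (y' := q.2)
      (by exact hp.1.1) (by rw [hpq]; exact hq.1.1)
    exact Prod.ext hpq this

/-- Births within the class of `r` are at most `|cls_ℓ(r)| - |cls_{ℓ+1}(r)|`. -/
lemma card_Br_le_witness {ℓ r : ℕ} :
    ((B S (ℓ+1)).filter (fun p => p.1 ∈ cls S (ℓ+1) r)).card
      ≤ (cls S ℓ r).card - (cls S (ℓ+1) r).card := by
  classical
  have hw : ∀ p : ℕ × ℕ, ∃ z, p ∈ B S (ℓ+1) →
      z ∈ Finset.Ioo p.1 p.2 ∧ sub S z ℓ = sub S p.1 ℓ := by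
    intro p
    by_cases hp : p ∈ B S (ℓ+1)
    · obtain ⟨z, hz1, hz2⟩ := birth_witness S hp
      exact ⟨z, fun _ => ⟨hz1, hz2⟩⟩
    · exact ⟨0, fun h => absurd h hp⟩
  choose f hf using hw
  have hcd : ((cls S ℓ r) \ (cls S (ℓ+1) r)).card
      = (cls S ℓ r).card - (cls S (ℓ+1) r).card :=
    Finset.card_sdiff_of_subset (cls_succ_subset S)
  rw [← hcd]
  apply Finset.card_le_card_of_injOn f
  · intro p hp
    rw [Finset.mem_coe, Finset.mem_filter] at hp
    obtain ⟨hpB, hp1⟩ := hp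
    obtain ⟨hzI, hzsub⟩ := hf p hpB
    rw [mem_B_succ] at hpB
    have hadj := hpB.1
    rw [Finset.mem_Ioo] at hzI
    have hp1c := (mem_cls S).1 hp1
    rw [Finset.mem_coe, Finset.mem_sdiff, mem_cls, mem_cls]
    refine ⟨⟨by have := hadj.2.1; omega,
      hzsub.trans (sub_eq_of_succ S hp1c.2)⟩, ?_⟩
    rintro ⟨-, hzeq⟩
    exact hadj.2.2.2 (f p) (by rw [Finset.mem_Ioo]; exact hzI)
      (hzeq.trans hp1c.2.symm)
  · intro p hp q hq hpq
    simp only [Finset.coe_filter, Set.mem_setOf_eq] at hp hq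
    obtain ⟨hpB, hp1⟩ := hp
    obtain ⟨hqB, hq1⟩ := hq
    obtain ⟨hpI, -⟩ := hf p hpB
    obtain ⟨hqI, -⟩ := hf q hqB
    rw [Finset.mem_Ioo] at hpI hqI
    rw [mem_B_succ] at hpB hqB
    have hsub : sub S q.1 (ℓ+1) = sub S p.1 (ℓ+1) :=
      ((mem_cls S).1 hq1).2.trans ((mem_cls S).1 hp1).2.symm
    rcases lt_trichotomy p.1 q.1 with h | h | h
    · exfalso
      refine hpB.1.2.2.2 q.1 ?_ hsub
      rw [Finset.mem_Ioo]
      omega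
    · have := adjP_right_unique S (x := p.1) (y := p.2) (y' := q.2)
        hpB.1 (by rw [h]; exact hqB.1)
      exact Prod.ext h this
    · exfalso
      refine hqB.1.2.2.2 p.1 ?_ hsub.symm
      rw [Finset.mem_Ioo]
      omega

end CCount

namespace CCount

set_option linter.unusedSectionVars false

variable {σ : Type*} [DecidableEq σ] (S : List σ)

/-- Potential function: `Φ(ℓ) = Σ_{x ∈ G ℓ} log₂ |cls_ℓ(x)|`. -/
noncomputable def Phi (ℓ : ℕ) : ℝ :=
  ∑ x ∈ G S ℓ, Real.logb 2 ((cls S ℓ x).card)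

lemma logb_card_nonneg {ℓ x : ℕ} (hx : x ∈ G S ℓ) :
    0 ≤ Real.logb 2 ((cls S ℓ x).card) := by
  apply Real.logb_nonneg (by norm_num)
  have : 1 ≤ (cls S ℓ x).card :=
    Finset.card_pos.2 ⟨x, self_mem_cls S ((mem_G S).1 hx)⟩
  exact_mod_cast this

lemma Phi_nonneg (ℓ : ℕ) : 0 ≤ Phi S ℓ :=
  Finset.sum_nonneg (fun x hx => logb_card_nonneg S hx)

/-- The transition bound: births at level `ℓ+1` are at most twice the potential drop. -/
lemma card_B_le (ℓ : ℕ) :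
    ((B S (ℓ+1)).card : ℝ) ≤ 2 * (Phi S ℓ - Phi S (ℓ+1)) := by
  classical
  -- partition `B (ℓ+1)` by the class of the first coordinate
  have hBU : B S (ℓ+1)
      = (R S (ℓ+1)).biUnion (fun r => (B S (ℓ+1)).filter (fun p => p.1 ∈ cls S (ℓ+1) r)) := by
    apply Finset.Subset.antisymm
    · intro p hp
      have hp1G : p.1 ∈ G S (ℓ+1) := by
        have hadj := ((mem_B_succ S).1 hp).1
        rw [mem_G]
        have := hadj.1; have := hadj.2.1
        omega
      obtain ⟨r, hr, hmem⟩ := exists_rep S hp1G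
      rw [Finset.mem_biUnion]
      exact ⟨r, hr, Finset.mem_filter.2 ⟨hp, hmem⟩⟩
    · intro p hp
      rw [Finset.mem_biUnion] at hp
      obtain ⟨r, -, hp⟩ := hp
      exact (Finset.mem_filter.1 hp).1
  have hdisj : ∀ r ∈ R S (ℓ+1), ∀ r' ∈ R S (ℓ+1), r ≠ r' →
      Disjoint ((B S (ℓ+1)).filter (fun p => p.1 ∈ cls S (ℓ+1) r))
        ((B S (ℓ+1)).filter (fun p => p.1 ∈ cls S (ℓ+1) r')) := by
    intro r hr r' hr' hne
    rw [Finset.disjoint_left]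
    intro p hp hp'
    exact (Finset.disjoint_left.1 (rep_disjoint S hr hr' hne))
      (Finset.mem_filter.1 hp).2 (Finset.mem_filter.1 hp').2
  rw [hBU, Finset.card_biUnion hdisj]
  push_cast
  -- bound each class's births via the numeric lemma
  have hstep : ∀ r ∈ R S (ℓ+1),
      (((B S (ℓ+1)).filter (fun p => p.1 ∈ cls S (ℓ+1) r)).card : ℝ)
        ≤ ∑ x ∈ cls S (ℓ+1) r,
            2 * (Real.logb 2 ((cls S ℓ x).card) - Real.logb 2 ((cls S (ℓ+1) x).card)) := by
    intro r hr
    have hrG : r ∈ G S (ℓ+1) := Finset.mem_filter.1 hr |>.1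
    have hd1 : 1 ≤ (cls S (ℓ+1) r).card :=
      Finset.card_pos.2 ⟨r, self_mem_cls S ((mem_G S).1 hrG)⟩
    have hdc : (cls S (ℓ+1) r).card ≤ (cls S ℓ r).card :=
      Finset.card_le_card (cls_succ_subset S)
    have hnum := numeric (c := (cls S ℓ r).card) (d := (cls S (ℓ+1) r).card)
      (m := ((B S (ℓ+1)).filter (fun p => p.1 ∈ cls S (ℓ+1) r)).card)
      hd1 hdc (card_Br_le_witness S) (card_Br_le_done S hrG)
    refine le_trans hnum ?_
    have hconst : ∀ x ∈ cls S (ℓ+1) r,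
        2 * (Real.logb 2 ((cls S ℓ x).card) - Real.logb 2 ((cls S (ℓ+1) x).card))
          = 2 * (Real.logb 2 ((cls S ℓ r).card) - Real.logb 2 ((cls S (ℓ+1) r).card)) := by
      intro x hx
      have h1 : cls S (ℓ+1) x = cls S (ℓ+1) r := cls_eq_of_mem S hx
      have h2 : cls S ℓ x = cls S ℓ r := cls_eq_of_mem S (cls_succ_subset S hx)
      rw [h1, h2]
    rw [Finset.sum_congr rfl hconst, Finset.sum_const, nsmul_eq_mul]
    ring_nf
    apply le_of_eq
    ring
  calc ∑ r ∈ R S (ℓ+1), (((B S (ℓ+1)).filter (fun p => p.1 ∈ cls S (ℓ+1) r)).card : ℝ)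
      ≤ ∑ r ∈ R S (ℓ+1), ∑ x ∈ cls S (ℓ+1) r,
          2 * (Real.logb 2 ((cls S ℓ x).card) - Real.logb 2 ((cls S (ℓ+1) x).card)) :=
        Finset.sum_le_sum hstep
    _ = ∑ x ∈ G S (ℓ+1),
          2 * (Real.logb 2 ((cls S ℓ x).card) - Real.logb 2 ((cls S (ℓ+1) x).card)) := by
        rw [G_eq_biUnion S (ℓ+1), Finset.sum_biUnion]
        intro r hr r' hr' hne
        exact rep_disjoint S hr hr' hne
    _ ≤ 2 * (Phi S ℓ - Phi S (ℓ+1)) := by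
        rw [← Finset.mul_sum, Finset.sum_sub_distrib]
        have h1 : ∑ x ∈ G S (ℓ+1), Real.logb 2 ((cls S ℓ x).card) ≤ Phi S ℓ := by
          apply Finset.sum_le_sum_of_subset_of_nonneg (G_succ_subset S ℓ)
          intro x hx _
          exact logb_card_nonneg S hx
        have h2 : (Phi S (ℓ+1)) = ∑ x ∈ G S (ℓ+1), Real.logb 2 ((cls S (ℓ+1) x).card) := rfl
        rw [← h2]
        have := Phi_nonneg S (ℓ+1)
        linarith

end CCount

namespace CCount

set_option linter.unusedSectionVars false

variable {σ : Type*} [DecidableEq σ] (S : List σ)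

lemma card_A_one_le : (A S 1).card ≤ S.length := by
  have hg : (G S 1).card = S.length := by
    rw [G, Finset.card_range]; omega
  rw [← hg]
  apply Finset.card_le_card_of_injOn Prod.fst
  · intro p hp
    rw [Finset.mem_coe, A, Finset.mem_filter, Finset.mem_product] at hp
    exact hp.1.1
  · intro p hp q hq hpq
    simp only [Finset.coe_filter, Set.mem_setOf_eq, A, Finset.mem_filter] at hp hq
    have := adjP_right_unique S (x := p.1) (y := p.2) (y' := q.2)
      hp.2 (by rw [hpq]; exact hq.2)
    exact Prod.ext hpq this

lemma Phi_one_le : Phi S 1 ≤ (S.length : ℝ) * Real.logb 2 (S.length) := by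
  have hcard : (G S 1).card = S.length := by rw [G, Finset.card_range]; omega
  have hterm : ∀ x ∈ G S 1, Real.logb 2 ((cls S 1 x).card) ≤ Real.logb 2 (S.length) := by
    intro x hx
    have h1 : 1 ≤ (cls S 1 x).card :=
      Finset.card_pos.2 ⟨x, self_mem_cls S ((mem_G S).1 hx)⟩
    have h2 : (cls S 1 x).card ≤ S.length := by
      calc (cls S 1 x).card ≤ (G S 1).card := Finset.card_le_card (Finset.filter_subset _ _)
        _ = S.length := hcard
    apply Real.logb_le_logb_of_le (by norm_num) (by exact_mod_cast h1)
    exact_mod_cast h2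
  calc Phi S 1 ≤ ∑ _x ∈ G S 1, Real.logb 2 (S.length) := Finset.sum_le_sum hterm
    _ = (S.length : ℝ) * Real.logb 2 (S.length) := by
        rw [Finset.sum_const, nsmul_eq_mul, hcard]

lemma main_bound (hn : 2 ≤ S.length) :
    (((A S 1 ∪ (Finset.Icc 2 (S.length - 1)).biUnion (B S)).card : ℕ) : ℝ)
      ≤ 3 * S.length * Real.logb 2 S.length := by
  classical
  set n := S.length with hn'
  have hlog1 : 1 ≤ Real.logb 2 n := by
    rw [← Real.logb_self_eq_one (b := 2) (by norm_num)]
    apply Real.logb_le_logb_of_le (by norm_num) (by norm_num)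
    exact_mod_cast hn
  -- sum of births over levels 2..n-1 telescopes
  have hsum : (∑ ℓ ∈ Finset.Icc 2 (n-1), ((B S ℓ).card : ℝ)) ≤ 2 * Phi S 1 := by
    have hIcc : Finset.Icc 2 (n-1) = Finset.Ico 2 n := by
      ext x; rw [Finset.mem_Icc, Finset.mem_Ico]; omega
    rw [hIcc, Finset.sum_Ico_eq_sum_range]
    have hstep : ∀ i ∈ Finset.range (n - 2), ((B S (2 + i)).card : ℝ)
        ≤ 2 * (Phi S (i+1) - Phi S (i+1+1)) := by
      intro i _
      have h : 2 + i = (i + 1) + 1 := by omega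
      rw [h]
      exact card_B_le S (i+1)
    calc (∑ i ∈ Finset.range (n-2), ((B S (2 + i)).card : ℝ))
        ≤ ∑ i ∈ Finset.range (n-2), 2 * (Phi S (i+1) - Phi S (i+1+1)) :=
          Finset.sum_le_sum hstep
      _ = 2 * ∑ i ∈ Finset.range (n-2), ((fun j => Phi S (j+1)) i - (fun j => Phi S (j+1)) (i+1)) := by
          rw [← Finset.mul_sum]
      _ = 2 * (Phi S 1 - Phi S (n - 2 + 1)) := by
          rw [Finset.sum_range_sub' (fun j => Phi S (j+1)) (n-2)]
      _ ≤ 2 * Phi S 1 := by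
          have := Phi_nonneg S (n - 2 + 1)
          linarith
  have hA1 : ((A S 1).card : ℝ) ≤ n := by exact_mod_cast card_A_one_le S
  have hunion : ((A S 1 ∪ (Finset.Icc 2 (n-1)).biUnion (B S)).card : ℝ)
      ≤ ((A S 1).card : ℝ) + ∑ ℓ ∈ Finset.Icc 2 (n-1), ((B S ℓ).card : ℝ) := by
    have h1 : (A S 1 ∪ (Finset.Icc 2 (n-1)).biUnion (B S)).card
        ≤ (A S 1).card + ((Finset.Icc 2 (n-1)).biUnion (B S)).card :=
      Finset.card_union_le _ _
    have h2 : ((Finset.Icc 2 (n-1)).biUnion (B S)).card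
        ≤ ∑ ℓ ∈ Finset.Icc 2 (n-1), (B S ℓ).card := Finset.card_biUnion_le
    push_cast
    have := le_trans h1 (by omega : (A S 1).card + ((Finset.Icc 2 (n-1)).biUnion (B S)).card ≤ (A S 1).card + ∑ ℓ ∈ Finset.Icc 2 (n-1), (B S ℓ).card)
    exact_mod_cast this
  have hnR : (2:ℝ) ≤ (n:ℝ) := by exact_mod_cast hn
  have hPhi := Phi_one_le S
  rw [← hn'] at hPhi
  calc ((A S 1 ∪ (Finset.Icc 2 (n-1)).biUnion (B S)).card : ℝ)
      ≤ ((A S 1).card : ℝ) + ∑ ℓ ∈ Finset.Icc 2 (n-1), ((B S ℓ).card : ℝ) := hunion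
    _ ≤ (n : ℝ) + 2 * Phi S 1 := by linarith
    _ ≤ (n : ℝ) + 2 * ((n:ℝ) * Real.logb 2 n) := by linarith
    _ ≤ 3 * n * Real.logb 2 n := by nlinarith

end CCount

universe u

/-- There is an absolute constant `C > 0` such that for every string `S` of length `n ≥ 2`
over any alphabet, the number of pairs that form a consecutive occurrence of at least one
nonempty pattern is at most `C · n · log₂ n`. -/
theorem stmt_10 : ∃ C : ℝ, 0 < C ∧
    ∀ (σ : Type u) (S : List σ), 2 ≤ S.length →
      ({p : ℕ × ℕ | ∃ P : List σ, P ≠ [] ∧ IsConsec S P p.1 p.2}.ncard : ℝ)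
        ≤ C * S.length * Real.logb 2 S.length := by
  refine ⟨3, by norm_num, ?_⟩
  intro σ S hn
  letI : DecidableEq σ := Classical.decEq σ
  set T := CCount.A S 1 ∪ (Finset.Icc 2 (S.length - 1)).biUnion (CCount.B S) with hT
  have hsub : {p : ℕ × ℕ | ∃ P : List σ, P ≠ [] ∧ IsConsec S P p.1 p.2} ⊆ (T : Set (ℕ × ℕ)) := by
    intro p hp
    rw [Finset.mem_coe]
    exact CCount.cover S p hp
  have h1 := Set.ncard_le_ncard hsub (Finset.finite_toSet T)
  rw [Set.ncard_coe_finset] at h1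
  calc ({p : ℕ × ℕ | ∃ P : List σ, P ≠ [] ∧ IsConsec S P p.1 p.2}.ncard : ℝ)
      ≤ (T.card : ℝ) := by exact_mod_cast h1
    _ ≤ 3 * S.length * Real.logb 2 S.length := CCount.main_bound S hn
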